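/- (Invariance of the affine closure under multiplication by a_{n+1}) Fix n≥3. Let F_n: B(Ã_{n-1}) → B(Ã_n) be the injective homomorphism σ_i ↦ σ_i, a_n ↦ σ_na_{n+1}σ_n^{-1}. For each m, let i_{m-1}: B(Ã_{m-1}) → B(B_m) be the homomorphism σ_i ↦ σ_i, a_m ↦ φ_mσ_{m-1}φ_m^{-1} (with φ_m = tσ_1⋯σ_{m-1}), let _mI: B(B_m) → B(A_m) be the injective homomorphism σ_i ↦ σ_{i+1}, t ↦ σ_1², and set x̄_m = _mI ∘ i_{m-1}. Then for every x ∈ B(Ã_{n-1}), the element (n+1, x̄_{n+1}(F_n(x)·a_{n+1})) of the disjoint union ⨆_{m≥1} B(A_m) is Markov equivalent to (n, x̄_n(x)); in other words, the affine closure of F_n(x)·a_{n+1} equals the affine closure of x. -/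

import Mathlib

/-- Relators of the `A`-type braid group `B(A n)`: generator `i : Fin n` stands for `σ_{i+1}`. -/
def braidRelsA (n : ℕ) : Set (FreeGroup (Fin n)) :=
  { r | (∃ i j : Fin n, (i : ℕ) + 2 ≤ (j : ℕ) ∧
          r = FreeGroup.of i * FreeGroup.of j * (FreeGroup.of j * FreeGroup.of i)⁻¹) ∨
        (∃ i j : Fin n, (j : ℕ) = (i : ℕ) + 1 ∧
          r = FreeGroup.of i * FreeGroup.of j * FreeGroup.of i *
              (FreeGroup.of j * FreeGroup.of i * FreeGroup.of j)⁻¹) }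

/-- The `A`-type braid group `B(A_n)` with `n` generators `σ_1, …, σ_n`. -/
abbrev BraidA (n : ℕ) : Type := PresentedGroup (braidRelsA n)

/-- Relators of the `B`-type braid group `B(B_{n+1})`: generator `some i` (`i : Fin n`)
stands for `σ_{i+1}`, and `none` stands for `t`. -/
def braidRelsB (n : ℕ) : Set (FreeGroup (Option (Fin n))) :=
  { r | (∃ i j : Fin n, (i : ℕ) + 2 ≤ (j : ℕ) ∧
          r = FreeGroup.of (some i) * FreeGroup.of (some j) *
              (FreeGroup.of (some j) * FreeGroup.of (some i))⁻¹) ∨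
        (∃ i j : Fin n, (j : ℕ) = (i : ℕ) + 1 ∧
          r = FreeGroup.of (some i) * FreeGroup.of (some j) * FreeGroup.of (some i) *
              (FreeGroup.of (some j) * FreeGroup.of (some i) * FreeGroup.of (some j))⁻¹) ∨
        (∃ i : Fin n, 1 ≤ (i : ℕ) ∧
          r = FreeGroup.of (some i) * FreeGroup.of none *
              (FreeGroup.of none * FreeGroup.of (some i))⁻¹) ∨
        (∃ i : Fin n, (i : ℕ) = 0 ∧
          r = FreeGroup.of (some i) * FreeGroup.of none * FreeGroup.of (some i) *
              FreeGroup.of none *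
              (FreeGroup.of none * FreeGroup.of (some i) * FreeGroup.of none *
                FreeGroup.of (some i))⁻¹) }

/-- The `B`-type braid group `B(B_{n+1})`, with generators `σ_1, …, σ_n` and `t`. -/
abbrev BraidB (n : ℕ) : Type := PresentedGroup (braidRelsB n)

/-- `φ_{n+1} = t σ_1 σ_2 ⋯ σ_n` in `B(B_{n+1})`. -/
noncomputable def phiB (n : ℕ) : BraidB n :=
  PresentedGroup.of none *
    ((List.finRange n).map fun i => (PresentedGroup.of (some i) : BraidB n)).prod

/-- `a_{n+1} = φ_{n+1} σ_n φ_{n+1}⁻¹` in `B(B_{n+1})`. -/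
noncomputable def aB (n : ℕ) (h : 0 < n) : BraidB n :=
  phiB n * PresentedGroup.of (some (⟨n - 1, by omega⟩ : Fin n)) * (phiB n)⁻¹

/-- Relators of the affine braid group `B(Ã_n)`: generator `some i` (`i : Fin n`)
stands for `σ_{i+1}`, and `none` stands for `a_{n+1}`. -/
def braidRelsAff (n : ℕ) : Set (FreeGroup (Option (Fin n))) :=
  { r | (∃ i j : Fin n, (i : ℕ) + 2 ≤ (j : ℕ) ∧
          r = FreeGroup.of (some i) * FreeGroup.of (some j) *
              (FreeGroup.of (some j) * FreeGroup.of (some i))⁻¹) ∨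
        (∃ i j : Fin n, (j : ℕ) = (i : ℕ) + 1 ∧
          r = FreeGroup.of (some i) * FreeGroup.of (some j) * FreeGroup.of (some i) *
              (FreeGroup.of (some j) * FreeGroup.of (some i) * FreeGroup.of (some j))⁻¹) ∨
        (∃ i : Fin n, 1 ≤ (i : ℕ) ∧ (i : ℕ) + 2 ≤ n ∧
          r = FreeGroup.of (some i) * FreeGroup.of none *
              (FreeGroup.of none * FreeGroup.of (some i))⁻¹) ∨
        (∃ i : Fin n, ((i : ℕ) = 0 ∨ (i : ℕ) + 1 = n) ∧
          r = FreeGroup.of (some i) * FreeGroup.of none * FreeGroup.of (some i) *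
              (FreeGroup.of none * FreeGroup.of (some i) * FreeGroup.of none)⁻¹) }

/-- The affine (`Ã`-type) braid group `B(Ã_n)`, with generators `σ_1, …, σ_n` and `a_{n+1}`. -/
abbrev BraidAff (n : ℕ) : Type := PresentedGroup (braidRelsAff n)

/-- One Markov move on the disjoint union `⨆ m, B(A_m)`, relative to a family `inc`
of tower inclusions `B(A_m) → B(A_{m+1})`: either replace `a * b` by `b * a` in the same
group, or replace `inc m x * σ_{m+1}` (in `B(A_{m+1})`) by `x` (in `B(A_m)`). -/
def MarkovStep (inc : ∀ m : ℕ, BraidA m →* BraidA (m + 1)) :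
    (Σ m : ℕ, BraidA m) → (Σ m : ℕ, BraidA m) → Prop := fun p q =>
  (∃ (m : ℕ) (a b : BraidA m), p = ⟨m, a * b⟩ ∧ q = ⟨m, b * a⟩) ∨
  (∃ (m : ℕ) (x : BraidA m),
      p = ⟨m + 1, inc m x * PresentedGroup.of (Fin.last m)⟩ ∧ q = ⟨m, x⟩)

/-- Markov equivalence: the equivalence relation generated by the Markov moves. -/
def MarkovEq (inc : ∀ m : ℕ, BraidA m →* BraidA (m + 1)) :
    (Σ m : ℕ, BraidA m) → (Σ m : ℕ, BraidA m) → Prop :=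
  Relation.EqvGen (MarkovStep inc)


section Aux

open PresentedGroup

lemma pg_rel_one {α : Type*} {rels : Set (FreeGroup α)} {r : FreeGroup α} (hr : r ∈ rels) :
    PresentedGroup.mk rels r = 1 :=
  (QuotientGroup.eq_one_iff r).mpr (Subgroup.subset_normalClosure hr)

lemma bA_comm {m : ℕ} (i j : Fin m) (h : (i : ℕ) + 2 ≤ (j : ℕ)) :
    (PresentedGroup.of i : BraidA m) * PresentedGroup.of j =
      PresentedGroup.of j * PresentedGroup.of i := by
  have h1 := pg_rel_one (rels := braidRelsA m) (Or.inl ⟨i, j, h, rfl⟩)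
  rw [map_mul, map_mul, map_inv, map_mul] at h1
  exact mul_inv_eq_one.mp h1

lemma bA_braid {m : ℕ} (i j : Fin m) (h : (j : ℕ) = (i : ℕ) + 1) :
    (PresentedGroup.of i : BraidA m) * PresentedGroup.of j * PresentedGroup.of i =
      PresentedGroup.of j * PresentedGroup.of i * PresentedGroup.of j := by
  have h1 := pg_rel_one (rels := braidRelsA m) (Or.inr ⟨i, j, h, rfl⟩)
  rw [map_mul, map_mul, map_inv, map_mul, map_mul] at h1
  exact mul_inv_eq_one.mp h1

/-- Total version of the generators of `BraidA N`. -/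
noncomputable def eA (N : ℕ) (k : ℕ) : BraidA N :=
  if h : k < N then PresentedGroup.of ⟨k, h⟩ else 1

lemma eA_of {N k : ℕ} (h : k < N) : eA N k = PresentedGroup.of ⟨k, h⟩ := dif_pos h

/-- `wA N j = e₁ e₂ ⋯ e_j` in `BraidA N`. -/
noncomputable def wA (N : ℕ) (j : ℕ) : BraidA N :=
  ((List.range j).map fun k => eA N (k + 1)).prod

lemma wA_zero (N : ℕ) : wA N 0 = 1 := by simp [wA]

lemma wA_succ (N j : ℕ) : wA N (j + 1) = wA N j * eA N (j + 1) := by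
  rw [wA, wA, List.range_succ, List.map_append, List.prod_append]; simp

lemma eA_comm {N : ℕ} (a b : ℕ) (hab : a + 2 ≤ b) (hb : b < N) :
    eA N a * eA N b = eA N b * eA N a := by
  rw [eA_of (show a < N by omega), eA_of hb]
  exact bA_comm ⟨a, by omega⟩ ⟨b, hb⟩ hab

lemma eA_braid {N : ℕ} (a : ℕ) (h : a + 1 < N) :
    eA N a * eA N (a + 1) * eA N a = eA N (a + 1) * eA N a * eA N (a + 1) := by
  rw [eA_of (show a < N by omega), eA_of h]
  exact bA_braid ⟨a, by omega⟩ ⟨a + 1, h⟩ rfl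

lemma eA_comm_w {N : ℕ} (b j : ℕ) (hj : j + 2 ≤ b) (hb : b < N) :
    eA N b * wA N j = wA N j * eA N b := by
  induction j with
  | zero => simp [wA]
  | succ j ih =>
      rw [wA_succ, ← mul_assoc, ih (by omega), mul_assoc,
        ← eA_comm (j + 1) b (by omega) hb, ← mul_assoc]

lemma core_abstract {G : Type*} [Group G] (a b C : G)
    (hbraid : a * b * a = b * a * b) (haC : a * C = C * a) :
    a * (C * b) * a * (C * b)⁻¹ * a⁻¹ = (C * b) * b * (C * b)⁻¹ := by
  have haC2 : C⁻¹ * a⁻¹ = a⁻¹ * C⁻¹ := by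
    rw [← mul_inv_rev, ← mul_inv_rev, haC]
  calc a * (C * b) * a * (C * b)⁻¹ * a⁻¹
      = (a * C) * (b * a * b⁻¹) * (C⁻¹ * a⁻¹) := by group
    _ = (C * a) * (b * a * b⁻¹) * (a⁻¹ * C⁻¹) := by rw [haC, haC2]
    _ = C * ((a * b * a) * b⁻¹ * a⁻¹) * C⁻¹ := by group
    _ = C * ((b * a * b) * b⁻¹ * a⁻¹) * C⁻¹ := by rw [hbraid]
    _ = (C * b) * b * (C * b)⁻¹ := by group

lemma hom_map_prod {β : Type*} {H G : Type*} [Group H] [Group G] (J : H →* G)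
    (l : List β) (u : β → H) (v : β → G) (hv : ∀ x ∈ l, J (u x) = v x) :
    J ((l.map u).prod) = (l.map v).prod := by
  rw [map_list_prod, List.map_map]
  exact congrArg List.prod (List.map_congr_left hv)

lemma finprod_eq_w (N N' : ℕ) :
    ((List.finRange N).map fun i : Fin N => eA N' ((i : ℕ) + 1)).prod = wA N' N := by
  rw [wA, ← List.map_coe_finRange_eq_range, List.map_map]
  rfl

end Aux

theorem stmt_19 (n : ℕ) (hn : 3 ≤ n)
    (inc : ∀ m : ℕ, BraidA m →* BraidA (m + 1))
    (hinc : ∀ (m : ℕ) (i : Fin m),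
      inc m (PresentedGroup.of i) = PresentedGroup.of i.castSucc)
    (F : BraidAff (n - 1) →* BraidAff n)
    (hFinj : Function.Injective F)
    (hF1 : ∀ i : Fin (n - 1), F (PresentedGroup.of (some i)) =
      PresentedGroup.of (some (i.castLE (by omega))))
    (hF2 : F (PresentedGroup.of none) =
      PresentedGroup.of (some (⟨n - 1, by omega⟩ : Fin n)) * PresentedGroup.of none *
        (PresentedGroup.of (some (⟨n - 1, by omega⟩ : Fin n)))⁻¹)
    (iBm : BraidAff (n - 1) →* BraidB (n - 1))
    (hiBm1 : ∀ i : Fin (n - 1), iBm (PresentedGroup.of (some i)) = PresentedGroup.of (some i))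
    (hiBm2 : iBm (PresentedGroup.of none) = aB (n - 1) (by omega))
    (iBn : BraidAff n →* BraidB n)
    (hiBn1 : ∀ i : Fin n, iBn (PresentedGroup.of (some i)) = PresentedGroup.of (some i))
    (hiBn2 : iBn (PresentedGroup.of none) = aB n (by omega))
    (Im : BraidB (n - 1) →* BraidA n)
    (hIminj : Function.Injective Im)
    (hIm1 : ∀ i : Fin (n - 1), Im (PresentedGroup.of (some i)) =
      PresentedGroup.of (⟨(i : ℕ) + 1, by have := i.isLt; omega⟩ : Fin n))
    (hIm2 : Im (PresentedGroup.of none) = PresentedGroup.of (⟨0, by omega⟩ : Fin n) ^ 2)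
    (In : BraidB n →* BraidA (n + 1))
    (hIninj : Function.Injective In)
    (hIn1 : ∀ i : Fin n, In (PresentedGroup.of (some i)) =
      PresentedGroup.of (⟨(i : ℕ) + 1, by have := i.isLt; omega⟩ : Fin (n + 1)))
    (hIn2 : In (PresentedGroup.of none) = PresentedGroup.of (⟨0, by omega⟩ : Fin (n + 1)) ^ 2) :
    ∀ x : BraidAff (n - 1),
      MarkovEq inc
        ⟨n + 1, In (iBn (F x * PresentedGroup.of none))⟩
        ⟨n, Im (iBm x)⟩ := by

  obtain ⟨m, rfl⟩ : ∃ m, n = m + 3 := ⟨n - 3, by omega⟩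
  intro x
  simp only [show m + 3 - 1 = m + 2 from rfl] at hF1 hF2 hiBm1 hiBm2 hIm1 hIm2
  -- abbreviations
  set a : BraidA (m + 4) := eA (m + 4) (m + 3) with ha
  set b : BraidA (m + 4) := eA (m + 4) (m + 2) with hb
  set C : BraidA (m + 4) := eA (m + 4) 0 ^ 2 * wA (m + 4) (m + 1) with hC
  have hbraid : a * b * a = b * a * b := (eA_braid (m + 2) (by omega)).symm
  have haC : a * C = C * a := by
    have h0 : eA (m + 4) (m + 3) * eA (m + 4) 0 = eA (m + 4) 0 * eA (m + 4) (m + 3) :=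
      (eA_comm 0 (m + 3) (by omega) (by omega)).symm
    have hw : eA (m + 4) (m + 3) * wA (m + 4) (m + 1) =
        wA (m + 4) (m + 1) * eA (m + 4) (m + 3) := eA_comm_w (m + 3) (m + 1) (by omega) (by omega)
    rw [ha, hC, pow_two, ← mul_assoc, ← mul_assoc, h0, mul_assoc, mul_assoc, ← mul_assoc (eA (m+4) (m+3)), h0, mul_assoc, hw, ← mul_assoc, ← mul_assoc, ← pow_two]
  -- the images of phi and a under In, Im
  have hInPhi : In (phiB (m + 3)) = eA (m + 4) 0 ^ 2 * wA (m + 4) (m + 3) := by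
    have hprod : In (((List.finRange (m + 3)).map fun i =>
        (PresentedGroup.of (some i) : BraidB (m + 3))).prod) = wA (m + 4) (m + 3) := by
      rw [hom_map_prod In _ _ (fun i : Fin (m + 3) => eA (m + 4) ((i : ℕ) + 1))
        (fun i _ => by rw [hIn1 i]; exact (eA_of (show (i : ℕ) + 1 < m + 4 by omega)).symm)]
      exact finprod_eq_w _ _
    rw [phiB, map_mul, hIn2, hprod, eA_of (show 0 < m + 4 by omega)]
  have hImPhi : Im (phiB (m + 2)) = eA (m + 3) 0 ^ 2 * wA (m + 3) (m + 2) := by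
    have hprod : Im (((List.finRange (m + 2)).map fun i =>
        (PresentedGroup.of (some i) : BraidB (m + 2))).prod) = wA (m + 3) (m + 2) := by
      rw [hom_map_prod Im _ _ (fun i : Fin (m + 2) => eA (m + 3) ((i : ℕ) + 1))
        (fun i _ => by rw [hIm1 i]; exact (eA_of (show (i : ℕ) + 1 < m + 3 by omega)).symm)]
      exact finprod_eq_w _ _
    rw [phiB, map_mul, hIm2, hprod, eA_of (show 0 < m + 3 by omega)]
  have hInA : In (aB (m + 3) (by omega)) = (C * b) * a * (C * b)⁻¹ := by
    rw [aB, map_mul, map_mul, map_inv, hInPhi, hIn1]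
    have h1 : In.toFun = In := rfl
    have hgen : (PresentedGroup.of
        (⟨((⟨m + 3 - 1, by omega⟩ : Fin (m + 3)) : ℕ) + 1, by omega⟩ : Fin (m + 4)) :
        BraidA (m + 4)) = a := by
      rw [ha, eA_of (show m + 3 < m + 4 by omega)]
      exact congrArg PresentedGroup.of (Fin.ext (show m + 3 - 1 + 1 = m + 3 by omega))
    rw [hgen]
    rw [show wA (m + 4) (m + 3) = wA (m + 4) (m + 1) * b * a by
      rw [wA_succ, wA_succ, hb, ha]]
    rw [hC]; group
  have hImA : Im (aB (m + 2) (by omega)) =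
      (eA (m + 3) 0 ^ 2 * wA (m + 3) (m + 2)) * eA (m + 3) (m + 2) *
        (eA (m + 3) 0 ^ 2 * wA (m + 3) (m + 2))⁻¹ := by
    rw [aB, map_mul, map_mul, map_inv, hImPhi, hIm1]
    have hgen : (PresentedGroup.of
        (⟨((⟨m + 2 - 1, by omega⟩ : Fin (m + 2)) : ℕ) + 1, by omega⟩ : Fin (m + 3)) :
        BraidA (m + 3)) = eA (m + 3) (m + 2) := by
      rw [eA_of (show m + 2 < m + 3 by omega)]
      exact congrArg PresentedGroup.of (Fin.ext (show m + 2 - 1 + 1 = m + 2 by omega))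
    rw [hgen]
  -- inc maps eA/wA to eA/wA
  have hinc_e : ∀ k : ℕ, k < m + 3 → inc (m + 3) (eA (m + 3) k) = eA (m + 4) k := by
    intro k hk
    rw [eA_of hk, hinc, eA_of (show k < m + 4 by omega)]
    rfl
  have hinc_w : ∀ j : ℕ, j ≤ m + 2 → inc (m + 3) (wA (m + 3) j) = wA (m + 4) j := by
    intro j hj
    rw [wA, wA]
    exact hom_map_prod (inc (m + 3)) _ _ _
      (fun k hk => hinc_e (k + 1) (by have := List.mem_range.mp hk; omega))
  have hiBm2' : iBm (PresentedGroup.of none) = aB (m + 2) (by omega) := hiBm2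
  -- equality of the two compositions as homomorphisms
  have hgh : In.comp (iBn.comp F) = (inc (m + 3)).comp (Im.comp iBm) := by
    apply PresentedGroup.ext
    intro o
    match o with
    | some i =>
        simp only [MonoidHom.comp_apply]
        rw [hF1 i, hiBn1, hIn1, hiBm1 i, hIm1 i, hinc]
        rfl
    | none =>
        simp only [MonoidHom.comp_apply]
        rw [hF2]
        simp only [map_mul, map_inv]
        rw [hiBn1, hiBn2, hIn1, hInA, hiBm2', hImA]
        simp only [map_mul, map_inv, map_pow]
        rw [hinc_e (m + 2) (by omega), hinc_w (m + 2) (by omega), hinc_e 0 (by omega)]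
        have hgen : (PresentedGroup.of
            (⟨((⟨m + 2, by omega⟩ : Fin (m + 3)) : ℕ) + 1, by omega⟩ : Fin (m + 4)) :
            BraidA (m + 4)) = a := by
          rw [ha, eA_of (show m + 3 < m + 4 by omega)]
        rw [hgen]
        rw [show wA (m + 4) (m + 2) = wA (m + 4) (m + 1) * b by rw [wA_succ, hb]]
        have := core_abstract a b C hbraid haC
        calc a * ((C * b) * a * (C * b)⁻¹) * a⁻¹
            = a * (C * b) * a * (C * b)⁻¹ * a⁻¹ := by group
          _ = (C * b) * b * (C * b)⁻¹ := this
          _ = eA (m + 4) 0 ^ 2 * (wA (m + 4) (m + 1) * b) * b *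
              (eA (m + 4) 0 ^ 2 * (wA (m + 4) (m + 1) * b))⁻¹ := by rw [hC]; group
  -- set up the Markov chain
  set y : BraidA (m + 3) := Im (iBm x) with hy
  set Q0 : BraidA (m + 3) := eA (m + 3) 0 ^ 2 * wA (m + 3) (m + 2) with hQ0
  have hincQ0 : inc (m + 3) Q0 = C * b := by
    rw [hQ0, map_mul, map_pow, hinc_e 0 (by omega), hinc_w (m + 2) (by omega),
      show wA (m + 4) (m + 2) = wA (m + 4) (m + 1) * b by rw [wA_succ, hb], hC]
    group
  have hincy : inc (m + 3) y = In (iBn (F x)) := by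
    rw [hy]
    have := congrFun (congrArg DFunLike.coe hgh) x
    simp only [MonoidHom.comp_apply] at this
    rw [this]
  have hX : In (iBn (F x * PresentedGroup.of none)) =
      inc (m + 3) (y * Q0) * (a * (inc (m + 3) Q0)⁻¹) := by
    rw [map_mul, map_mul, hiBn2, hInA, map_mul, hincy, hincQ0]
    group
  rw [hX]
  refine Relation.EqvGen.trans _ _ _
    (Relation.EqvGen.rel _ _ (Or.inl ⟨m + 4, _, _, rfl, rfl⟩)) ?_
  have e2 : (a * (inc (m + 3) Q0)⁻¹) * inc (m + 3) (y * Q0) =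
      a * inc (m + 3) (Q0⁻¹ * (y * Q0)) := by
    simp only [map_mul, map_inv]
    group
  rw [e2]
  refine Relation.EqvGen.trans _ _ _
    (Relation.EqvGen.rel _ _ (Or.inl ⟨m + 4, _, _, rfl, rfl⟩)) ?_
  have e3 : a = PresentedGroup.of (Fin.last (m + 3)) := by
    rw [ha, eA_of (show m + 3 < m + 4 by omega)]
    rfl
  rw [e3]
  refine Relation.EqvGen.trans _ _ _
    (Relation.EqvGen.rel _ _ (Or.inr ⟨m + 3, Q0⁻¹ * (y * Q0), rfl, rfl⟩)) ?_
  refine Relation.EqvGen.trans _ _ _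
    (Relation.EqvGen.rel _ _ (Or.inl ⟨m + 3, Q0⁻¹, y * Q0, rfl, rfl⟩)) ?_
  rw [show (y * Q0) * Q0⁻¹ = y by group]
  exact Relation.EqvGen.refl _
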